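/- In particular, two second-order polynomials over ℕ agreeing semantically on all inputs are syntactically equivalent: if ⟦P⟧(n,ℓ) = ⟦Q⟧(n,ℓ) for all n ∈ ℕ and all nondecreasing ℓ : ℕ → ℕ, then P ≡ Q under the equivalence generated by commutativity, associativity, unit, distributivity, and congruence. -/

import Mathlib

/-- Second-order polynomials over ℕ: terms over `1`, `N`, `+`, `·`, `Λ(·)`. -/
inductive SOP where
  | one : SOP
  | varN : SOP
  | add : SOP → SOP → SOP
  | mul : SOP → SOP → SOP
  | lam : SOP → SOP

/-- Semantics of a second-order polynomial at `n : ℕ` and `ℓ : ℕ → ℕ`. -/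
def SOP.eval : SOP → ℕ → (ℕ → ℕ) → ℕ
  | one, _, _ => 1
  | varN, n, _ => n
  | add P Q, n, l => P.eval n l + Q.eval n l
  | mul P Q, n, l => P.eval n l * Q.eval n l
  | lam P, n, l => l (P.eval n l)

/-- Syntactic equivalence of second-order polynomials, generated by
commutativity, associativity, unit, distributivity, and congruence. -/
inductive SOP.Equiv : SOP → SOP → Prop
  | refl (P : SOP) : SOP.Equiv P P
  | symm {P Q : SOP} : SOP.Equiv P Q → SOP.Equiv Q P
  | trans {P Q R : SOP} : SOP.Equiv P Q → SOP.Equiv Q R → SOP.Equiv P R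
  | addComm (P Q : SOP) : SOP.Equiv (.add P Q) (.add Q P)
  | addAssoc (P Q R : SOP) : SOP.Equiv (.add (.add P Q) R) (.add P (.add Q R))
  | mulComm (P Q : SOP) : SOP.Equiv (.mul P Q) (.mul Q P)
  | mulAssoc (P Q R : SOP) : SOP.Equiv (.mul (.mul P Q) R) (.mul P (.mul Q R))
  | mulOne (P : SOP) : SOP.Equiv (.mul P .one) P
  | distrib (P Q R : SOP) :
      SOP.Equiv (.mul P (.add Q R)) (.add (.mul P Q) (.mul P R))
  | addCongr {P P' Q Q' : SOP} :
      SOP.Equiv P P' → SOP.Equiv Q Q' → SOP.Equiv (.add P Q) (.add P' Q')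
  | mulCongr {P P' Q Q' : SOP} :
      SOP.Equiv P P' → SOP.Equiv Q Q' → SOP.Equiv (.mul P Q) (.mul P' Q')
  | lamCongr {P P' : SOP} : SOP.Equiv P P' → SOP.Equiv (.lam P) (.lam P')

namespace SOPAux

open SOP

/-- Product of a list of atoms. -/
def prodNF : List SOP → SOP
  | [] => .one
  | a :: l => .mul a (prodNF l)

/-- Sum of a nonempty list of monomials (junk value `one` on `[]`). -/
def sumNF : List (List SOP) → SOP
  | [] => .one
  | [m] => prodNF m
  | m :: l => .add (prodNF m) (sumNF l)

lemma sumNF_cons (m : List SOP) {l : List (List SOP)} (h : l ≠ []) :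
    sumNF (m :: l) = .add (prodNF m) (sumNF l) := by
  cases l with
  | nil => exact absurd rfl h
  | cons x t => rfl

/-- Normal form of a term: a list of monomials (lists of atoms). -/
def toNF : SOP → List (List SOP)
  | .one => [[]]
  | .varN => [[.varN]]
  | .add P Q => toNF P ++ toNF Q
  | .mul P Q => (toNF P).flatMap fun m => (toNF Q).map (m ++ ·)
  | .lam P => [[.lam (sumNF (toNF P))]]

lemma toNF_ne_nil (P : SOP) : toNF P ≠ [] := by
  induction P with
  | one => simp [toNF]
  | varN => simp [toNF]
  | add P Q ihP ihQ => simp [toNF, ihP, ihQ]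
  | mul P Q ihP ihQ =>
      simp only [toNF, ne_eq, List.flatMap_eq_nil_iff, not_forall]
      refine ⟨(toNF P).head (by exact ihP), List.head_mem _, ?_⟩
      simp [List.map_eq_nil_iff, ihQ]
  | lam P ih => simp [toNF]

/-- Soundness of `Equiv` w.r.t. evaluation. -/
lemma Equiv.eval_eq {P Q : SOP} (h : SOP.Equiv P Q) (n : ℕ) (l : ℕ → ℕ) :
    P.eval n l = Q.eval n l := by
  induction h with
  | refl => rfl
  | symm _ ih => exact ih.symm
  | trans _ _ ih₁ ih₂ => exact ih₁.trans ih₂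
  | addComm P Q => simp [SOP.eval]; ring
  | addAssoc P Q R => simp [SOP.eval]; ring
  | mulComm P Q => simp [SOP.eval]; ring
  | mulAssoc P Q R => simp [SOP.eval]; ring
  | mulOne P => simp [SOP.eval]
  | distrib P Q R => simp [SOP.eval]; ring
  | addCongr _ _ ih₁ ih₂ => simp [SOP.eval, ih₁, ih₂]
  | mulCongr _ _ ih₁ ih₂ => simp [SOP.eval, ih₁, ih₂]
  | lamCongr _ ih => simp [SOP.eval, ih]

open SOP.Equiv

lemma add_left_comm_equiv (a b c : SOP) :
    SOP.Equiv (.add a (.add b c)) (.add b (.add a c)) :=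
  .trans (.symm (addAssoc a b c)) (.trans (addCongr (addComm a b) (.refl c)) (addAssoc b a c))

lemma mul_left_comm_equiv (a b c : SOP) :
    SOP.Equiv (.mul a (.mul b c)) (.mul b (.mul a c)) :=
  .trans (.symm (mulAssoc a b c)) (.trans (mulCongr (mulComm a b) (.refl c)) (mulAssoc b a c))

/-- `prodNF` is invariant under permutation, up to `Equiv`. -/
lemma prodNF_perm {l l' : List SOP} (h : l.Perm l') :
    SOP.Equiv (prodNF l) (prodNF l') := by
  induction h with
  | nil => exact .refl _
  | cons x _ ih => exact mulCongr (.refl x) ih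
  | swap x y l => exact mul_left_comm_equiv y x (prodNF l)
  | trans _ _ ih₁ ih₂ => exact .trans ih₁ ih₂

lemma sumNF_ne_nil_of_perm {l l' : List (List SOP)} (h : l.Perm l') (hl : l ≠ []) :
    l' ≠ [] := by
  intro hh; subst hh; exact hl h.eq_nil

lemma sumNF_perm {l l' : List (List SOP)} (h : l.Perm l') :
    SOP.Equiv (sumNF l) (sumNF l') := by
  induction h with
  | nil => exact .refl _
  | @cons x t t' h ih =>
      cases t with
      | nil => have := h.symm.eq_nil; subst this; exact .refl _
      | cons b tb =>
          have ht' : t' ≠ [] := sumNF_ne_nil_of_perm h (by simp)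
          rw [sumNF_cons x (by simp), sumNF_cons x ht']
          exact addCongr (.refl _) ih
  | swap x y l =>
      cases l with
      | nil => exact addComm _ _
      | cons b tb =>
          rw [sumNF_cons y (by simp), sumNF_cons x (by simp),
            sumNF_cons x (by simp), sumNF_cons y (by simp)]
          exact add_left_comm_equiv _ _ _
  | trans _ _ ih₁ ih₂ => exact .trans ih₁ ih₂

/-- `prodNF` congruence along `Forall₂ Equiv`. -/
lemma prodNF_congr {l l' : List SOP} (h : List.Forall₂ SOP.Equiv l l') :
    SOP.Equiv (prodNF l) (prodNF l') := by
  induction h with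
  | nil => exact .refl _
  | cons hab _ ih => exact mulCongr hab ih

lemma sumNF_congr {l l' : List (List SOP)}
    (h : List.Forall₂ (fun m m' => SOP.Equiv (prodNF m) (prodNF m')) l l') :
    SOP.Equiv (sumNF l) (sumNF l') := by
  induction h with
  | nil => exact .refl _
  | @cons a b t t' hab h ih =>
      cases t with
      | nil => cases h; exact hab
      | cons c tc =>
          have ht' : t' ≠ [] := by cases h; simp
          rw [sumNF_cons _ (by simp), sumNF_cons _ ht']
          exact addCongr hab ih

lemma sumNF_append {l₁ l₂ : List (List SOP)} (h₁ : l₁ ≠ []) (h₂ : l₂ ≠ []) :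
    SOP.Equiv (sumNF (l₁ ++ l₂)) (.add (sumNF l₁) (sumNF l₂)) := by
  induction l₁ with
  | nil => exact absurd rfl h₁
  | cons x t ih =>
      cases t with
      | nil =>
          rw [List.singleton_append, sumNF_cons x h₂]
          exact .refl _
      | cons b tb =>
          rw [List.cons_append, sumNF_cons x (by simp [h₂]), sumNF_cons x (by simp)]
          exact .trans (addCongr (.refl _) (ih (by simp))) (.symm (addAssoc _ _ _))

lemma prodNF_append (m₁ m₂ : List SOP) :
    SOP.Equiv (prodNF (m₁ ++ m₂)) (.mul (prodNF m₁) (prodNF m₂)) := by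
  induction m₁ with
  | nil =>
      exact .symm (.trans (mulComm _ _) (mulOne _))
  | cons a t ih =>
      simp only [List.cons_append, prodNF]
      exact .trans (mulCongr (.refl a) ih) (.symm (mulAssoc _ _ _))

lemma sumNF_map_append {m : List SOP} {l₂ : List (List SOP)} (h₂ : l₂ ≠ []) :
    SOP.Equiv (sumNF (l₂.map (m ++ ·))) (.mul (prodNF m) (sumNF l₂)) := by
  induction l₂ with
  | nil => exact absurd rfl h₂
  | cons y t ih =>
      cases t with
      | nil => exact prodNF_append m y
      | cons b tb =>
          rw [List.map_cons, sumNF_cons _ (by simp), sumNF_cons _ (by simp)]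
          exact .trans (addCongr (prodNF_append m y) (ih (by simp)))
            (.symm (distrib _ _ _))

lemma flatMap_ne_nil {l₁ : List (List SOP)} {l₂ : List (List SOP)}
    (h₁ : l₁ ≠ []) (h₂ : l₂ ≠ []) :
    (l₁.flatMap fun m => l₂.map (m ++ ·)) ≠ [] := by
  simp only [ne_eq, List.flatMap_eq_nil_iff, not_forall]
  exact ⟨l₁.head h₁, List.head_mem _, by simp [List.map_eq_nil_iff, h₂]⟩

lemma sumNF_flatMap {l₁ l₂ : List (List SOP)} (h₁ : l₁ ≠ []) (h₂ : l₂ ≠ []) :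
    SOP.Equiv (sumNF (l₁.flatMap fun m => l₂.map (m ++ ·)))
      (.mul (sumNF l₁) (sumNF l₂)) := by
  induction l₁ with
  | nil => exact absurd rfl h₁
  | cons x t ih =>
      cases t with
      | nil =>
          simp only [List.flatMap_cons, List.flatMap_nil, List.append_nil]
          exact sumNF_map_append h₂
      | cons b tb =>
          rw [List.flatMap_cons, sumNF_cons x (by simp)]
          refine .trans (sumNF_append (by simp [List.map_eq_nil_iff, h₂])
            (flatMap_ne_nil (by simp) h₂)) ?_
          refine .trans (addCongr (sumNF_map_append h₂) (ih (by simp))) ?_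
          -- add (mul px s₂) (mul st s₂) ~ mul (add px st) s₂
          exact .symm (.trans (mulComm _ _)
            (.trans (distrib _ _ _) (addCongr (mulComm _ _) (mulComm _ _))))

/-- Soundness of normalization. -/
lemma nf_sound (P : SOP) : SOP.Equiv P (sumNF (toNF P)) := by
  induction P with
  | one => exact .refl _
  | varN => exact .symm (mulOne _)
  | add P Q ihP ihQ =>
      exact .trans (addCongr ihP ihQ)
        (.symm (sumNF_append (toNF_ne_nil P) (toNF_ne_nil Q)))
  | mul P Q ihP ihQ =>
      exact .trans (mulCongr ihP ihQ)
        (.symm (sumNF_flatMap (toNF_ne_nil P) (toNF_ne_nil Q)))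
  | lam P ih =>
      exact .trans (lamCongr ih) (.symm (mulOne _))

/-! ### Base-`B` digit uniqueness -/

def msum (B : ℕ) : List ℕ → ℕ
  | [] => 0
  | e :: s => B ^ e + msum B s

lemma msum_perm (B : ℕ) {s t : List ℕ} (h : s.Perm t) : msum B s = msum B t := by
  induction h with
  | nil => rfl
  | cons x _ ih => simp [msum, ih]
  | swap x y l => simp [msum]; ring
  | trans _ _ ih₁ ih₂ => exact ih₁.trans ih₂

lemma msum_append (B : ℕ) (s t : List ℕ) :
    msum B (s ++ t) = msum B s + msum B t := by
  induction s with
  | nil => simp [msum]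
  | cons e s ih => simp [msum, ih]; ring

lemma msum_replicate_zero (B c : ℕ) : msum B (List.replicate c 0) = c := by
  induction c with
  | zero => rfl
  | succ c ih => simp [List.replicate_succ, msum, ih]; omega

lemma msum_map_succ (B : ℕ) (s : List ℕ) :
    msum B (s.map (· + 1)) = B * msum B s := by
  induction s with
  | nil => simp [msum]
  | cons e s ih => simp [msum, ih, pow_succ]; ring

lemma msum_pos (B : ℕ) (hB : 1 ≤ B) {s : List ℕ} (hs : s ≠ []) : 1 ≤ msum B s := by
  cases s with
  | nil => exact absurd rfl hs
  | cons e s =>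
      have : 1 ≤ B ^ e := Nat.one_le_pow _ _ hB
      simp only [msum]; omega

/-- Decomposition: a list of naturals is a permutation of its zeros plus successors. -/
lemma zero_succ_decomp (s : List ℕ) :
    s.Perm (List.replicate (s.count 0) 0 ++ ((s.filter (· ≠ 0)).map (· - 1)).map (· + 1)) := by
  have h1 : ((s.filter (· ≠ 0)).map (· - 1)).map (· + 1) = s.filter (· ≠ 0) := by
    rw [List.map_map]
    refine List.map_congr_left ?_ |>.trans (List.map_id _)
    intro a ha
    have : a ≠ 0 := by simpa using (List.mem_filter.1 ha).2
    simp; omega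
  rw [h1]
  have h2 : List.replicate (s.count 0) 0 = s.filter (· = 0) := by
    symm
    refine List.eq_replicate_iff.2 ⟨?_, ?_⟩
    · rw [List.count, List.countP_eq_length_filter]
      congr 1
    · intro b hb; simpa using (List.mem_filter.1 hb).2
  rw [h2]
  have := (List.filter_append_perm (fun x => decide (x = 0)) s).symm
  refine (this.trans (List.Perm.append_left _ ?_)).symm.symm
  apply List.Perm.of_eq
  congr 1
  funext x
  simp

lemma msum_decomp (B : ℕ) (s : List ℕ) :
    msum B s = s.count 0 + B * msum B ((s.filter (· ≠ 0)).map (· - 1)) := by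
  rw [msum_perm B (zero_succ_decomp s), msum_append, msum_replicate_zero, msum_map_succ]

/-- Uniqueness of base-`B` representations: two short lists of exponents with the
same power-sum are permutations of each other. -/
lemma msum_inj (B : ℕ) (hB : 2 ≤ B) :
    ∀ (n : ℕ) (s t : List ℕ), s.length < B → t.length < B →
      msum B s = msum B t → msum B s ≤ n → s.Perm t := by
  intro n
  induction n with
  | zero =>
      intro s t _ _ heq hle
      have hs : s = [] := by
        by_contra h
        have := msum_pos B (by omega) h; omega
      have ht : t = [] := by
        by_contra h
        have := msum_pos B (by omega) h; omega
      subst hs; subst ht; exact .refl _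
  | succ n ih =>
      intro s t hs ht heq hle
      set s' := (s.filter (· ≠ 0)).map (· - 1) with hs'
      set t' := (t.filter (· ≠ 0)).map (· - 1) with ht'
      have hds := msum_decomp B s
      have hdt := msum_decomp B t
      rw [← hs'] at hds
      rw [← ht'] at hdt
      have hcs : s.count 0 < B := lt_of_le_of_lt List.count_le_length hs
      have hct : t.count 0 < B := lt_of_le_of_lt List.count_le_length ht
      -- counts agree
      have hmod : s.count 0 = t.count 0 := by
        have h1 : msum B s % B = s.count 0 := by
          rw [hds]; rw [Nat.add_mul_mod_self_left]; exact Nat.mod_eq_of_lt hcs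
        have h2 : msum B t % B = t.count 0 := by
          rw [hdt]; rw [Nat.add_mul_mod_self_left]; exact Nat.mod_eq_of_lt hct
        rw [← h1, ← h2, heq]
      -- quotients agree
      have hdiv : msum B s' = msum B t' := by
        have h1 : msum B s / B = msum B s' := by
          rw [hds, Nat.add_mul_div_left _ _ (by omega : 0 < B),
            Nat.div_eq_of_lt hcs, Nat.zero_add]
        have h2 : msum B t / B = msum B t' := by
          rw [hdt, Nat.add_mul_div_left _ _ (by omega : 0 < B),
            Nat.div_eq_of_lt hct, Nat.zero_add]
        rw [← h1, ← h2, heq]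
      have hlen_s' : s'.length < B := by
        have : s'.length ≤ s.length := by
          rw [hs', List.length_map]; exact List.length_filter_le _ _
        omega
      have hlen_t' : t'.length < B := by
        have : t'.length ≤ t.length := by
          rw [ht', List.length_map]; exact List.length_filter_le _ _
        omega
      have hfuel : msum B s' ≤ n := by
        have h2 : 2 * msum B s' ≤ B * msum B s' := Nat.mul_le_mul_right _ hB
        omega
      have hperm' : s'.Perm t' := ih s' t' hlen_s' hlen_t' hdiv hfuel
      refine ((zero_succ_decomp s).trans ?_).trans (zero_succ_decomp t).symm
      rw [← hs', ← ht', hmod]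
      exact List.Perm.append_left _ (hperm'.map _)

/-- Matching lemma: if two lists have permutation-equal key-images,
they can be matched pairwise with equal keys. -/
lemma key_match {α : Type} (f : α → ℕ) :
    ∀ (l l' : List α), (l.map f).Perm (l'.map f) →
      ∃ l'', l'.Perm l'' ∧ List.Forall₂ (fun a b => f a = f b) l l'' := by
  intro l
  induction l with
  | nil =>
      intro l' h
      have : l' = [] := by
        have := h.symm.eq_nil
        simpa using List.map_eq_nil_iff.1 this
      subst this
      exact ⟨[], .refl _, .nil⟩
  | cons a t ih =>
      intro l' h
      have hmem : f a ∈ l'.map f := h.mem_iff.1 (by simp)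
      obtain ⟨b, hb, hfb⟩ := List.mem_map.1 hmem
      obtain ⟨u, v, huv⟩ := List.append_of_mem hb
      subst huv
      have hmid : (u ++ b :: v).Perm (b :: (u ++ v)) := List.perm_middle
      have hmaps : (f a :: t.map f).Perm (f b :: (u ++ v).map f) := by
        refine h.trans ?_
        simpa using hmid.map f
      rw [hfb] at hmaps
      have htail : (t.map f).Perm ((u ++ v).map f) := hmaps.cons_inv
      obtain ⟨l''₀, hperm₀, hf₀⟩ := ih (u ++ v) htail
      exact ⟨b :: l''₀, hmid.trans (hperm₀.cons b),
        List.Forall₂.cons hfb.symm hf₀⟩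

lemma forall₂_imp_mem {α : Type} {R R' : α → α → Prop} :
    ∀ {l l' : List α}, List.Forall₂ R l l' →
      (∀ a b, a ∈ l → b ∈ l' → R a b → R' a b) → List.Forall₂ R' l l' := by
  intro l l' h
  induction h with
  | nil => intro _; exact .nil
  | @cons a b t t' hab _ ih =>
      intro himp
      exact .cons (himp a b (by simp) (by simp) hab)
        (ih fun x y hx hy => himp x y (by simp [hx]) (by simp [hy]))

/-! ### The generic evaluation point -/

/-- The fast-growing oracle `m ↦ B ^ ((D+1)^m)`. -/
def mfun (B D : ℕ) : ℕ → ℕ := fun m => B ^ ((D + 1) ^ m)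

lemma mfun_monotone {B : ℕ} (hB : 1 ≤ B) (D : ℕ) : Monotone (mfun B D) := by
  intro x y hxy
  exact Nat.pow_le_pow_right hB (Nat.pow_le_pow_right (by omega) hxy)

lemma eval_pos (P : SOP) (n : ℕ) (l : ℕ → ℕ) (hn : 1 ≤ n) (hl : ∀ x, 1 ≤ l x) :
    1 ≤ P.eval n l := by
  induction P with
  | one => exact le_refl _
  | varN => exact hn
  | add P Q ihP ihQ => simp only [SOP.eval]; omega
  | mul P Q ihP ihQ =>
      simp only [SOP.eval]
      calc 1 = 1 * 1 := rfl
        _ ≤ _ := Nat.mul_le_mul ihP ihQ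
  | lam P ih => exact hl _

/-- The "logarithmic weight" of an atom at the generic point. -/
def uval (B D : ℕ) : SOP → ℕ := fun a =>
  match a with
  | .lam s => s.eval B (mfun B D)
  | _ => 0

/-- The key of a monomial at the generic point. -/
def kval (B D : ℕ) (m : List SOP) : ℕ := msum (D + 1) (m.map (uval B D))

def IsAtom (a : SOP) : Prop := a = .varN ∨ ∃ s, a = .lam s

lemma eval_atom {B D : ℕ} {a : SOP} (h : IsAtom a) :
    a.eval B (mfun B D) = B ^ ((D + 1) ^ (uval B D a)) := by
  rcases h with h | ⟨s, h⟩ <;> subst h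
  · simp [SOP.eval, uval, mfun]
  · simp [SOP.eval, uval, mfun]

lemma eval_prod {B D : ℕ} {m : List SOP} (h : ∀ a ∈ m, IsAtom a) :
    (prodNF m).eval B (mfun B D) = B ^ (kval B D m) := by
  induction m with
  | nil => simp [prodNF, kval, msum, SOP.eval]
  | cons a t ih =>
      simp only [prodNF, SOP.eval, kval, List.map_cons, msum]
      rw [eval_atom (h a (by simp)), ih (fun x hx => h x (by simp [hx])), pow_add]
      rfl

lemma eval_sum {B D : ℕ} {d : List (List SOP)} (hd : d ≠ [])
    (h : ∀ m ∈ d, ∀ a ∈ m, IsAtom a) :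
    (sumNF d).eval B (mfun B D) = msum B (d.map (kval B D)) := by
  induction d with
  | nil => exact absurd rfl hd
  | cons m t ih =>
      cases t with
      | nil =>
          simp only [sumNF, List.map_cons, List.map_nil, msum]
          rw [eval_prod (h m (by simp))]
          omega
      | cons b tb =>
          rw [sumNF_cons m (by simp), List.map_cons]
          simp only [SOP.eval, msum]
          rw [eval_prod (h m (by simp)), ih (by simp)
            (fun x hx => h x (by simp [hx]))]

/-! ### Size bounds -/

/-- A bound on the number and length of monomials in `toNF`. -/
def bnd : SOP → ℕ
  | .one => 1
  | .varN => 1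
  | .add P Q => bnd P + bnd Q
  | .mul P Q => (bnd P + 1) * (bnd Q + 1)
  | .lam P => bnd P + 1

lemma bnd_pos (P : SOP) : 1 ≤ bnd P := by
  induction P with
  | one => exact le_refl _
  | varN => exact le_refl _
  | add P Q ihP ihQ => simp [bnd]; omega
  | mul P Q ihP ihQ =>
      simp only [bnd]
      calc 1 = 1 * 1 := rfl
        _ ≤ _ := Nat.mul_le_mul (by omega) (by omega)
  | lam P ih => simp [bnd]

lemma length_flatMap_map {α : Type} (l₁ l₂ : List (List α)) :
    ((l₁.flatMap fun m => l₂.map (m ++ ·)).length) = l₁.length * l₂.length := by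
  induction l₁ with
  | nil => simp
  | cons x t ih => simp [List.flatMap_cons, ih]; ring

lemma length_toNF (P : SOP) : (toNF P).length ≤ bnd P := by
  induction P with
  | one => simp [toNF, bnd]
  | varN => simp [toNF, bnd]
  | add P Q ihP ihQ => simp only [toNF, bnd, List.length_append]; omega
  | mul P Q ihP ihQ =>
      simp only [toNF, bnd]
      rw [length_flatMap_map]
      calc (toNF P).length * (toNF Q).length ≤ bnd P * bnd Q :=
            Nat.mul_le_mul ihP ihQ
        _ ≤ (bnd P + 1) * (bnd Q + 1) := Nat.mul_le_mul (by omega) (by omega)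
  | lam P ih => simp [toNF, bnd]

lemma monlen_toNF (P : SOP) : ∀ m ∈ toNF P, m.length ≤ bnd P := by
  induction P with
  | one => intro m hm; simp [toNF] at hm; simp [hm, bnd]
  | varN => intro m hm; simp [toNF] at hm; simp [hm, bnd]
  | add P Q ihP ihQ =>
      intro m hm
      simp only [toNF, List.mem_append] at hm
      have h1 : bnd P ≤ bnd (.add P Q) := by simp [bnd]
      have h2 : bnd Q ≤ bnd (.add P Q) := by simp [bnd]
      rcases hm with hm | hm
      · exact le_trans (ihP m hm) h1
      · exact le_trans (ihQ m hm) h2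
  | mul P Q ihP ihQ =>
      intro m hm
      simp only [toNF, List.mem_flatMap, List.mem_map] at hm
      obtain ⟨m₁, hm₁, m₂, hm₂, rfl⟩ := hm
      rw [List.length_append]
      have := ihP m₁ hm₁
      have := ihQ m₂ hm₂
      have hexp : bnd (SOP.mul P Q) = bnd P * bnd Q + bnd P + bnd Q + 1 := by
        simp [bnd]; ring
      omega
  | lam P ih =>
      intro m hm; simp [toNF] at hm; simp [hm, bnd]

lemma atoms_spec : ∀ (P : SOP), ∀ m ∈ toNF P, ∀ a ∈ m,
    a = .varN ∨ ∃ R : SOP, sizeOf R < sizeOf P ∧ bnd R ≤ bnd P ∧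
      a = .lam (sumNF (toNF R)) := by
  intro P
  induction P with
  | one => intro m hm a ha; simp [toNF] at hm; subst hm; simp at ha
  | varN => intro m hm a ha; simp [toNF] at hm; subst hm; simp at ha; left; exact ha
  | add P Q ihP ihQ =>
      intro m hm a ha
      simp only [toNF, List.mem_append] at hm
      rcases hm with hm | hm
      · rcases ihP m hm a ha with h | ⟨R, h1, h2, h3⟩
        · exact Or.inl h
        · exact Or.inr ⟨R, by simp; omega, by simp [bnd]; omega, h3⟩
      · rcases ihQ m hm a ha with h | ⟨R, h1, h2, h3⟩
        · exact Or.inl h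
        · exact Or.inr ⟨R, by simp; omega, by simp [bnd]; omega, h3⟩
  | mul P Q ihP ihQ =>
      intro m hm a ha
      simp only [toNF, List.mem_flatMap, List.mem_map] at hm
      obtain ⟨m₁, hm₁, m₂, hm₂, rfl⟩ := hm
      have hbP : bnd P ≤ bnd (SOP.mul P Q) := by
        have := bnd_pos P; have := bnd_pos Q
        have hexp : bnd (SOP.mul P Q) = bnd P * bnd Q + bnd P + bnd Q + 1 := by
          simp [bnd]; ring
        omega
      have hbQ : bnd Q ≤ bnd (SOP.mul P Q) := by
        have := bnd_pos P; have := bnd_pos Q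
        have hexp : bnd (SOP.mul P Q) = bnd P * bnd Q + bnd P + bnd Q + 1 := by
          simp [bnd]; ring
        omega
      rcases List.mem_append.1 ha with ha | ha
      · rcases ihP m₁ hm₁ a ha with h | ⟨R, h1, h2, h3⟩
        · exact Or.inl h
        · exact Or.inr ⟨R, by simp; omega, le_trans h2 hbP, h3⟩
      · rcases ihQ m₂ hm₂ a ha with h | ⟨R, h1, h2, h3⟩
        · exact Or.inl h
        · exact Or.inr ⟨R, by simp; omega, le_trans h2 hbQ, h3⟩
  | lam P ih =>
      intro m hm a ha
      simp [toNF] at hm; subst hm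
      simp at ha
      exact Or.inr ⟨P, by simp, by simp [bnd], ha⟩

lemma atoms_isAtom (P : SOP) : ∀ m ∈ toNF P, ∀ a ∈ m, IsAtom a := by
  intro m hm a ha
  rcases atoms_spec P m hm a ha with h | ⟨R, _, _, h⟩
  · exact Or.inl h
  · exact Or.inr ⟨_, h⟩

lemma sop_sizeOf_pos (R : SOP) : 1 ≤ sizeOf R := by
  cases R <;> simp <;> omega

lemma mfun_pos (B D : ℕ) (hB : 1 ≤ B) : ∀ x, 1 ≤ mfun B D x := by
  intro x
  exact Nat.one_le_pow _ _ (by omega)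

lemma uval_lam (B D : ℕ) (s : SOP) : uval B D (.lam s) = s.eval B (mfun B D) := rfl

lemma uval_varN (B D : ℕ) : uval B D .varN = 0 := rfl

/-- Main completeness lemma at the generic point. -/
lemma complete (S : ℕ) (hS : 1 ≤ S) : ∀ (N : ℕ) (R R' : SOP),
    sizeOf R + sizeOf R' ≤ N → bnd R ≤ S → bnd R' ≤ S →
    (sumNF (toNF R)).eval (S + 2) (mfun (S + 2) S) =
      (sumNF (toNF R')).eval (S + 2) (mfun (S + 2) S) →
    SOP.Equiv (sumNF (toNF R)) (sumNF (toNF R')) := by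
  intro N
  induction N with
  | zero =>
      intro R R' hN _ _ _
      have := sop_sizeOf_pos R; have := sop_sizeOf_pos R'
      omega
  | succ N ih =>
      intro R R' hN hbR hbR' heval
      set B := S + 2 with hB
      rw [eval_sum (toNF_ne_nil R) (atoms_isAtom R),
        eval_sum (toNF_ne_nil R') (atoms_isAtom R')] at heval
      have hlenR : ((toNF R).map (kval B S)).length < B := by
        rw [List.length_map]
        have := length_toNF R; omega
      have hlenR' : ((toNF R').map (kval B S)).length < B := by
        rw [List.length_map]
        have := length_toNF R'; omega
      have hperm : ((toNF R).map (kval B S)).Perm ((toNF R').map (kval B S)) :=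
        msum_inj B (by omega) _ _ _ hlenR hlenR' heval (le_refl _)
      obtain ⟨l'', hpermR', hf⟩ := key_match (kval B S) (toNF R) (toNF R') hperm
      refine .trans (sumNF_congr ?_) (.symm (sumNF_perm hpermR'))
      refine forall₂_imp_mem hf ?_
      intro m m'' hm hm'' hk
      have hm''R' : m'' ∈ toNF R' := hpermR'.symm.subset hm''
      -- monomial level
      have hlm : (m.map (uval B S)).length < S + 1 := by
        rw [List.length_map]
        have := monlen_toNF R m hm; omega
      have hlm'' : (m''.map (uval B S)).length < S + 1 := by
        rw [List.length_map]
        have := monlen_toNF R' m'' hm''R'; omega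
      have hpermA : (m.map (uval B S)).Perm (m''.map (uval B S)) :=
        msum_inj (S + 1) (by omega) _ _ _ hlm hlm'' hk (le_refl _)
      obtain ⟨la, hpermA', hfa⟩ := key_match (uval B S) m m'' hpermA
      refine .trans (prodNF_congr ?_) (.symm (prodNF_perm hpermA'))
      refine forall₂_imp_mem hfa ?_
      intro a b hain hbin hu
      have hbm'' : b ∈ m'' := hpermA'.symm.subset hbin
      have hpos1 : (1 : ℕ) ≤ B := by omega
      have hposl := mfun_pos B S hpos1
      rcases atoms_spec R m hm a hain with ha | ⟨Ra, hsa, hba, ha⟩ <;>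
        rcases atoms_spec R' m'' hm''R' b hbm'' with hb | ⟨Rb, hsb, hbb, hb⟩
      · rw [ha, hb]; exact .refl _
      · exfalso
        rw [ha, hb, uval_varN, uval_lam] at hu
        have := eval_pos (sumNF (toNF Rb)) B (mfun B S) hpos1 hposl
        omega
      · exfalso
        rw [ha, hb, uval_lam, uval_varN] at hu
        have := eval_pos (sumNF (toNF Ra)) B (mfun B S) hpos1 hposl
        omega
      · rw [ha, hb]
        rw [ha, hb, uval_lam, uval_lam] at hu
        refine SOP.Equiv.lamCongr ?_
        exact ih Ra Rb (by omega) (le_trans hba hbR) (le_trans hbb hbR') hu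

end SOPAux

/-- Semantic agreement on all inputs implies syntactic equivalence. -/
theorem SOP.equiv_of_eval (P Q : SOP)
    (h : ∀ (n : ℕ) (l : ℕ → ℕ), Monotone l → P.eval n l = Q.eval n l) :
    SOP.Equiv P Q := by
  open SOPAux in
  have hS : 1 ≤ max (bnd P) (bnd Q) := le_trans (bnd_pos P) (le_max_left _ _)
  set S := max (bnd P) (bnd Q) with hSdef
  have hmono : Monotone (mfun (S + 2) S) := mfun_monotone (by omega) S
  have heval : P.eval (S + 2) (mfun (S + 2) S) = Q.eval (S + 2) (mfun (S + 2) S) :=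
    h _ _ hmono
  have h1 : (sumNF (toNF P)).eval (S + 2) (mfun (S + 2) S) =
      (sumNF (toNF Q)).eval (S + 2) (mfun (S + 2) S) := by
    rw [← Equiv.eval_eq (nf_sound P), ← Equiv.eval_eq (nf_sound Q)]
    exact heval
  have hmain := complete S hS (sizeOf P + sizeOf Q) P Q (le_refl _)
    (le_max_left _ _) (le_max_right _ _) h1
  exact .trans (nf_sound P) (.trans hmain (.symm (nf_sound Q)))
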